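/- Suppose A ⊕ A' = {0,...,R−1} with A ≠ {0} and A' ≠ {0}, R ≥ 2. Then there exist subsets L, L' ⊂ {0,...,R−1} with L ⊕ L' = {0,...,R−1} such that the matrices ((1/√#A) e^{2πi a l / R})_{a∈A, l∈L} and ((1/√#A') e^{2πi a' l' / R})_{a'∈A', l'∈L'} are both unitary. -/

import Mathlib

open Complex Real

/-- `A ⊕ A' = {0,…,R−1}`: the sum map `A × A' → {0,…,R−1}` is a bijection. -/
def ComplPair (A A' : Finset ℕ) (R : ℕ) : Prop :=
  (∀ a ∈ A, ∀ a' ∈ A', a + a' < R) ∧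
    ∀ k < R, ∃! p : ℕ × ℕ, p.1 ∈ A ∧ p.2 ∈ A' ∧ p.1 + p.2 = k

/-- `(R,A,L)` is a Hadamard system: `#A = #L` and the square matrix
`(1/√#A · e^{2πial/R})_{a∈A, l∈L}` is unitary (its rows are orthonormal). -/
def IsHadamard (R : ℕ) (A L : Finset ℕ) : Prop :=
  A.card = L.card ∧
    ∀ a ∈ A, ∀ b ∈ A,
      (A.card : ℂ)⁻¹ * ∑ l ∈ L, Complex.exp (2 * Real.pi * Complex.I * a * l / R) *
        starRingEnd ℂ (Complex.exp (2 * Real.pi * Complex.I * b * l / R)) =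
      if a = b then 1 else 0


noncomputable def eps (R : ℕ) (d : ℤ) : ℂ := Complex.exp (2 * Real.pi * Complex.I * d / R)

lemma eps_zero (R : ℕ) : eps R 0 = 1 := by simp [eps]

lemma eps_add (R : ℕ) (d e : ℤ) : eps R (d + e) = eps R d * eps R e := by
  unfold eps
  rw [← Complex.exp_add]
  congr 1
  push_cast
  ring

lemma eps_conj (R : ℕ) (d : ℤ) : starRingEnd ℂ (eps R d) = eps R (-d) := by
  unfold eps
  rw [← Complex.exp_conj]
  congr 1
  simp only [map_div₀, map_mul, Complex.conj_I, Complex.conj_ofNat, map_intCast, map_natCast]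
  rw [show (starRingEnd ℂ) (Real.pi : ℂ) = (Real.pi : ℂ) from Complex.conj_ofReal _]
  push_cast
  ring

lemma eps_nat_mul (R : ℕ) (d : ℤ) (j : ℕ) : eps R (d * j) = eps R d ^ j := by
  unfold eps
  rw [← Complex.exp_nat_mul]
  congr 1
  push_cast
  ring

lemma eps_pow_self (n : ℕ) (hn : n ≠ 0) (d : ℤ) : eps n d ^ n = 1 := by
  rw [← eps_nat_mul]
  unfold eps
  have hnc : (n : ℂ) ≠ 0 := Nat.cast_ne_zero.mpr hn
  rw [show (2 * (Real.pi:ℂ) * Complex.I * ((d * (n:ℤ) : ℤ) : ℂ) / n) = d * (2 * Real.pi * Complex.I) by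
    push_cast; field_simp]
  exact Complex.exp_int_mul_two_pi_mul_I d

lemma geom_eps (n : ℕ) (d : ℤ) (hd : ¬ (n:ℤ) ∣ d) : ∑ j ∈ Finset.range n, eps n (d * j) = 0 := by
  rcases Nat.eq_zero_or_pos n with h0 | hpos
  · subst h0; simp
  have hn : n ≠ 0 := hpos.ne'
  have hnc : (n : ℂ) ≠ 0 := Nat.cast_ne_zero.mpr hn
  have hne : eps n d ≠ 1 := by
    unfold eps
    rw [Ne, Complex.exp_eq_one_iff]
    rintro ⟨k, hk⟩
    apply hd
    refine ⟨k, ?_⟩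
    have h2 : (2 * (Real.pi:ℂ) * Complex.I) ≠ 0 := by
      simp [Real.pi_ne_zero, Complex.I_ne_zero]
    have : (d : ℂ) = n * k := by
      field_simp at hk
      have h3 : (2*(Real.pi:ℂ)*Complex.I) * (d:ℂ) = (2*(Real.pi:ℂ)*Complex.I) * ((n:ℂ)*k) := by
        linear_combination (2*(Real.pi:ℂ)*Complex.I) * hk
      exact mul_left_cancel₀ h2 h3
    exact_mod_cast this
  simp only [eps_nat_mul]
  rw [geom_sum_eq hne]
  rw [eps_pow_self n hn d]
  simp

lemma eps_scale (n m : ℕ) (hn : n ≠ 0) (d : ℤ) : eps (n * m) (d * n) = eps m d := by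
  unfold eps
  rcases Nat.eq_zero_or_pos m with h0 | hpos
  · subst h0; simp
  have hnc : (n : ℂ) ≠ 0 := Nat.cast_ne_zero.mpr hn
  have hmc : (m : ℂ) ≠ 0 := Nat.cast_ne_zero.mpr hpos.ne'
  congr 1
  push_cast
  field_simp

lemma term_eq (R a b l : ℕ) :
    Complex.exp (2 * Real.pi * Complex.I * a * l / R) *
      starRingEnd ℂ (Complex.exp (2 * Real.pi * Complex.I * b * l / R)) =
    eps R (((a:ℤ) - b) * l) := by
  have h1 : ∀ c : ℕ, Complex.exp (2 * Real.pi * Complex.I * c * l / R) = eps R ((c : ℤ) * l) := by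
    intro c; unfold eps; congr 1; push_cast; ring
  rw [h1 a, h1 b, eps_conj, ← eps_add]
  congr 1
  ring

lemma isHadamard_of (R : ℕ) (A L : Finset ℕ) (hA : A.Nonempty) (hcard : A.card = L.card)
    (hoff : ∀ a ∈ A, ∀ b ∈ A, a ≠ b → ∑ l ∈ L, eps R (((a:ℤ) - b) * l) = 0) :
    IsHadamard R A L := by
  refine ⟨hcard, ?_⟩
  intro a ha b hb
  rw [Finset.sum_congr rfl (fun l _ => term_eq R a b l)]
  by_cases hab : a = b
  · subst hab
    simp only [if_pos rfl, sub_self, zero_mul, eps_zero, Finset.sum_const, nsmul_eq_mul, mul_one]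
    rw [← hcard]
    have : (A.card : ℂ) ≠ 0 := Nat.cast_ne_zero.mpr (Finset.card_ne_zero_of_mem (hA.choose_spec))
    field_simp
    simp
  · rw [hoff a ha b hb hab, if_neg hab, mul_zero]

lemma had_off (R : ℕ) (A L : Finset ℕ) (h : IsHadamard R A L) :
    ∀ a ∈ A, ∀ b ∈ A, a ≠ b → ∑ l ∈ L, eps R (((a:ℤ) - b) * l) = 0 := by
  intro a ha b hb hab
  have := h.2 a ha b hb
  rw [Finset.sum_congr rfl (fun l _ => term_eq R a b l), if_neg hab] at this
  have hA : (A.card : ℂ) ≠ 0 := Nat.cast_ne_zero.mpr (Finset.card_ne_zero_of_mem ha)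
  exact (mul_eq_zero.mp this).resolve_left (inv_ne_zero hA)

variable {A A' : Finset ℕ} {R : ℕ}

lemma ComplPair.swap (h : ComplPair A A' R) : ComplPair A' A R := by
  constructor
  · intro a' ha' a ha; rw [add_comm]; exact h.1 a ha a' ha'
  · intro k hk
    obtain ⟨p, ⟨h1, h2, h3⟩, hu⟩ := h.2 k hk
    refine ⟨(p.2, p.1), ⟨h2, h1, by omega⟩, ?_⟩
    rintro ⟨q1, q2⟩ ⟨hq1, hq2, hq3⟩
    have := hu (q2, q1) ⟨hq2, hq1, by omega⟩
    simp only [Prod.ext_iff] at this ⊢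
    exact ⟨this.2, this.1⟩

lemma ComplPair.zero_mem (h : ComplPair A A' R) (hR : 0 < R) : 0 ∈ A ∧ 0 ∈ A' := by
  obtain ⟨p, ⟨h1, h2, h3⟩, _⟩ := h.2 0 hR
  obtain ⟨hp1, hp2⟩ : p.1 = 0 ∧ p.2 = 0 := by omega
  rw [hp1] at h1; rw [hp2] at h2
  exact ⟨h1, h2⟩

lemma ComplPair.uniq (h : ComplPair A A' R) {k a a' b b' : ℕ} (hk : k < R)
    (ha : a ∈ A) (ha' : a' ∈ A') (hs : a + a' = k)
    (hb : b ∈ A) (hb' : b' ∈ A') (hs' : b + b' = k) : a = b ∧ a' = b' := by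
  obtain ⟨p, _, hu⟩ := h.2 k hk
  have h1 := hu (a, a') ⟨ha, ha', hs⟩
  have h2 := hu (b, b') ⟨hb, hb', hs'⟩
  rw [← h2] at h1
  simpa [Prod.ext_iff] using h1

/-- The de Bruijn structural lemma. -/
lemma struct (h : ComplPair A A' R) (h0A : 0 ∈ A) (h0A' : 0 ∈ A')
    {n : ℕ} (hn : n ∈ A') (hnmin : ∀ a' ∈ A', a' ≠ 0 → n ≤ a') (hn2 : 2 ≤ n)
    (hpre : ∀ r < n, r ∈ A) :
    ∀ k < R, ∀ a ∈ A, ∀ a' ∈ A', a + a' = k →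
      n ∣ a' ∧ ∀ b ∈ A, ∀ b' ∈ A', b + b' = n * (k / n) → b' = a' := by
  intro k
  induction k using Nat.strong_induction_on with
  | _ k IH =>
  intro hk a ha a' ha' hsum
  have hnpos : 0 < n := by omega
  have hmd : n * (k / n) + k % n = k := Nat.div_add_mod k n
  have htlt : k % n < n := Nat.mod_lt _ hnpos
  set t := k % n with ht
  rcases Nat.eq_zero_or_pos t with ht0 | htpos
  · -- k ≡ 0 mod n
    have huniq : ∀ b ∈ A, ∀ b' ∈ A', b + b' = n * (k / n) → b' = a' := by
      intro b hb b' hb' hs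
      exact ((h.uniq hk hb hb' (by omega) ha ha' hsum)).2
    refine ⟨?_, huniq⟩
    rcases Nat.eq_zero_or_pos a with ha0 | hapos
    · -- a = 0, a' = k divisible by n
      have : a' = k := by omega
      rw [this]
      exact Nat.dvd_of_mod_eq_zero (by omega)
    · -- a > 0: a' < k, use IH at a'
      have ha'R : a' < R := by have := h.1 0 h0A a' ha'; omega
      have ha'k : a' < k := by omega
      exact (IH a' ha'k ha'R 0 h0A a' ha' (by omega)).1
  · -- t > 0
    have hk0lt : n * (k / n) < k := by omega
    have hk0R : n * (k / n) < R := by omega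
    obtain ⟨p, ⟨hp1, hp2, hp3⟩, _⟩ := h.2 (n * (k / n)) hk0R
    obtain ⟨hdvd0, huniq0⟩ := IH (n * (k/n)) hk0lt hk0R p.1 hp1 p.2 hp2 hp3
    rw [Nat.mul_div_cancel_left _ hnpos] at huniq0
    have hα : n ∣ p.1 := by
      have h1 : p.1 = n * (k/n) - p.2 := by omega
      rw [h1]
      exact Nat.dvd_sub (dvd_mul_right n _) hdvd0
    -- main claim : p.1 + t ∈ A
    have hmain : p.1 + t ∈ A := by
      rcases Nat.eq_zero_or_pos p.2 with hp20 | hp2pos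
      · -- base case: p.1 = k₀ ∈ A; show a' = 0
        have hp1k : p.1 = n * (k/n) := by omega
        have ha'0 : a' = 0 := by
          by_contra ha'ne
          have ha'n : n ≤ a' := hnmin a' ha' ha'ne
          rcases Nat.eq_zero_or_pos a with ha0 | hapos
          · -- a = 0, k ∈ A'
            have hkA' : k ∈ A' := by rwa [show k = a' by omega]
            have hu : n - t ∈ A := hpre (n - t) (by omega)
            have hmR : (n - t) + k < R := h.1 _ hu _ hkA'
            have hdecomp2 : n * (k/n) + n = (n - t) + k := by omega
            have hpair := h.uniq hmR (hp1k ▸ hp1) hn hdecomp2 hu hkA' rfl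
            -- hpair.2 : n = k
            have : t = 0 := by rw [ht, ← hpair.2, Nat.mod_self]
            omega
          · -- a > 0
            have ha'R : a' < R := by have := h.1 0 h0A a' ha'; omega
            obtain ⟨q, hq'⟩ := (IH a' (by omega) ha'R 0 h0A a' ha' (by omega)).1
            have haR : a < R := by have := h.1 a ha 0 h0A'; omega
            have hak : a < k := by omega
            have haq : a + n * q = k := by omega
            have hamod : a % n = t := by
              rw [ht, ← haq, Nat.add_mul_mod_self_left]
            have hmda : n * (a / n) + a % n = a := Nat.div_add_mod a n
            obtain ⟨hd2, hu2⟩ := IH a hak haR a ha 0 h0A' (by omega)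
            have hbaseR : n * (a / n) < R := by omega
            obtain ⟨q2, ⟨hq21, hq22, hq23⟩, _⟩ := h.2 (n * (a/n)) hbaseR
            have hq220 : q2.2 = 0 := hu2 q2.1 hq21 q2.2 hq22 hq23
            have hbA : n * (a/n) ∈ A := by
              have he : q2.1 = n * (a/n) := by omega
              rwa [← he]
            have hsum2 : n * (a/n) + a' = n * (k/n) := by omega
            have := h.uniq hk0R hbA ha' hsum2 (hp1k ▸ hp1) h0A' (by omega)
            exact absurd this.2 ha'ne
        have he : p.1 + t = a := by omega
        rwa [he]
      · -- p.2 > 0 : use IH at k' = p.1 + t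
        have hp1lt : p.1 < n * (k/n) := by omega
        have hk' : p.1 + t < k := by omega
        have hk'R : p.1 + t < R := by omega
        obtain ⟨q, ⟨hq1, hq2, hq3⟩, _⟩ := h.2 (p.1 + t) hk'R
        obtain ⟨_, hu3⟩ := IH (p.1 + t) hk' hk'R q.1 hq1 q.2 hq2 hq3
        obtain ⟨c, hc⟩ := hα
        have hbase : n * ((p.1 + t) / n) = p.1 := by
          rw [hc, Nat.mul_add_div hnpos, Nat.div_eq_of_lt htlt, add_zero]
        have h0q : (0:ℕ) = q.2 := hu3 p.1 hp1 0 h0A' (by omega)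
        have he : q.1 = p.1 + t := by omega
        rwa [← he]
    -- conclude
    have hdec : (p.1 + t) + p.2 = k := by omega
    obtain ⟨haeq, ha'eq⟩ := h.uniq hk ha ha' hsum hmain hp2 hdec
    refine ⟨by rw [ha'eq]; exact hdvd0, ?_⟩
    intro b hb b' hb' hs
    rw [ha'eq]
    exact huniq0 b hb b' hb' hs

lemma base_inj {n a b r s : ℕ} (hr : r < n) (hs : s < n) (h : n * a + r = n * b + s) :
    a = b ∧ r = s := by
  have hab : a = b := by
    rcases lt_trichotomy a b with hl | he | hg
    · have h1 : n * (a+1) ≤ n * b := Nat.mul_le_mul_left n hl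
      rw [mul_add, mul_one] at h1; omega
    · exact he
    · have h1 : n * (b+1) ≤ n * a := Nat.mul_le_mul_left n hg
      rw [mul_add, mul_one] at h1; omega
  subst hab
  exact ⟨rfl, by omega⟩

lemma structure_all (h : ComplPair A A' R) (hR : 2 ≤ R) (h0A : 0 ∈ A) (h0A' : 0 ∈ A')
    (h1A : 1 ∈ A) (hA' : ∃ x ∈ A', x ≠ 0) :
    ∃ (n m : ℕ) (C C' : Finset ℕ), 2 ≤ n ∧ 1 ≤ m ∧ R = n * m ∧ ComplPair C C' m ∧
      (∀ a, a ∈ A ↔ ∃ c ∈ C, ∃ r < n, a = n * c + r) ∧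
      (∀ a', a' ∈ A' ↔ ∃ c' ∈ C', a' = n * c') ∧
      A.card = n * C.card ∧ A'.card = C'.card := by
  classical
  -- define n
  set S := A'.filter (· ≠ 0) with hS
  have hSne : S.Nonempty := by
    obtain ⟨x, hx, hx0⟩ := hA'
    exact ⟨x, by simp [hS, hx, hx0]⟩
  set n := S.min' hSne with hndef
  have hnS : n ∈ S := S.min'_mem hSne
  have hnA' : n ∈ A' := (Finset.mem_filter.mp hnS).1
  have hn0 : n ≠ 0 := by simpa using (Finset.mem_filter.mp hnS).2
  have hnmin : ∀ a' ∈ A', a' ≠ 0 → n ≤ a' := by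
    intro a' ha' h0
    exact S.min'_le a' (by simp [hS, ha', h0])
  have hn2 : 2 ≤ n := by
    rcases Nat.lt_or_ge n 2 with hlt | hge
    · interval_cases n
      · omega
      · -- n = 1 : 1 ∈ A ∩ A' contradiction
        exfalso
        have := h.uniq (k := 1) (by omega) h1A h0A' (by omega) h0A hnA' (by omega)
        omega
    · exact hge
  have hnR : n < R := by have := h.1 0 h0A n hnA'; omega
  have hpre : ∀ r < n, r ∈ A := by
    intro r hr
    obtain ⟨p, ⟨hp1, hp2, hp3⟩, _⟩ := h.2 r (by omega)
    have hp20 : p.2 = 0 := by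
      by_contra hne
      have := hnmin p.2 hp2 hne
      omega
    have : p.1 = r := by omega
    rwa [← this]
  have hstruct := struct h h0A h0A' hnA' hnmin hn2 hpre
  have hnpos : 0 < n := by omega
  -- S1
  have S1 : ∀ a' ∈ A', n ∣ a' := by
    intro a' ha'
    have ha'R : a' < R := by have := h.1 0 h0A a' ha'; omega
    exact (hstruct a' ha'R 0 h0A a' ha' (by omega)).1
  -- S2
  have S2 : ∀ a ∈ A, n * (a / n) ∈ A := by
    intro a ha
    have haR : a < R := by have := h.1 a ha 0 h0A'; omega
    have hu := (hstruct a haR a ha 0 h0A' (by omega)).2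
    have hbR : n * (a / n) < R := by
      have : n * (a / n) ≤ a := Nat.mul_div_le a n
      omega
    obtain ⟨q, ⟨hq1, hq2, hq3⟩, _⟩ := h.2 (n * (a/n)) hbR
    have h0q : q.2 = 0 := hu q.1 hq1 q.2 hq2 hq3
    have : q.1 = n * (a/n) := by omega
    rwa [← this]
  -- S3
  have S3 : ∀ c r : ℕ, n * c ∈ A → r < n → n * c + r ∈ A := by
    intro c r hc hr
    have hkR : n * c + r < R := by
      have := h.1 (n*c) hc n hnA'
      omega
    obtain ⟨q, ⟨hq1, hq2, hq3⟩, _⟩ := h.2 (n * c + r) hkR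
    have hdiv : (n * c + r) / n = c := by
      rw [Nat.mul_add_div hnpos, Nat.div_eq_of_lt hr, add_zero]
    have hu := (hstruct (n*c+r) hkR q.1 hq1 q.2 hq2 hq3).2
    rw [hdiv] at hu
    have h0q : (0:ℕ) = q.2 := hu (n*c) hc 0 h0A' (by omega)
    have : q.1 = n * c + r := by omega
    rwa [← this]
  -- S4
  have S4 : n ∣ R := by
    obtain ⟨p, ⟨hp1, hp2, hp3⟩, _⟩ := h.2 (R - 1) (by omega)
    obtain ⟨c', hc'⟩ := S1 p.2 hp2
    have hbase : n * (p.1 / n) ∈ A := S2 p.1 hp1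
    have hmda : n * (p.1 / n) + p.1 % n = p.1 := Nat.div_add_mod p.1 n
    have hmlt : p.1 % n < n := Nat.mod_lt _ hnpos
    have htop : p.1 % n = n - 1 := by
      by_contra hne
      have hlt : p.1 % n + 1 < n := by omega
      have hmem : n * (p.1 / n) + (p.1 % n + 1) ∈ A := S3 _ _ hbase hlt
      have := h.1 _ hmem p.2 hp2
      omega
    refine ⟨p.1 / n + c' + 1, ?_⟩
    have : R = n * (p.1/n) + (n-1) + n * c' + 1 := by omega
    rw [this]; ring_nf; omega
  set m := R / n with hmdef
  have hRnm : R = n * m := (Nat.mul_div_cancel' S4).symm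
  have hm1 : 1 ≤ m := by
    rcases Nat.eq_zero_or_pos m with h0 | h1
    · rw [h0, mul_zero] at hRnm; omega
    · exact h1
  -- C, C'
  set C := (A.filter (fun a => a % n = 0)).image (· / n) with hCdef
  set C' := A'.image (· / n) with hC'def
  have hCmem : ∀ c, c ∈ C ↔ n * c ∈ A := by
    intro c
    simp only [hCdef, Finset.mem_image, Finset.mem_filter]
    constructor
    · rintro ⟨a, ha2, rfl⟩
      obtain ⟨haA, hmod⟩ := ha2
      have hda : n * (a / n) + a % n = a := Nat.div_add_mod a n
      have heq : n * (a / n) = a := by omega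
      rwa [heq]
    · intro hc
      exact ⟨n * c, ⟨hc, Nat.mul_mod_right n c⟩, Nat.mul_div_cancel_left c hnpos⟩
  have hC'mem : ∀ c, c ∈ C' ↔ n * c ∈ A' := by
    intro c
    simp only [hC'def, Finset.mem_image]
    constructor
    · rintro ⟨a, haA, rfl⟩
      obtain ⟨d, hd⟩ := S1 a haA
      have hda : n * (a / n) + a % n = a := Nat.div_add_mod a n
      have hm0 : a % n = 0 := by rw [hd]; exact Nat.mul_mod_right n d
      have heq : n * (a / n) = a := by omega
      rwa [heq]
    · intro hc
      exact ⟨n * c, hc, Nat.mul_div_cancel_left c hnpos⟩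
  have hAchar : ∀ a, a ∈ A ↔ ∃ c ∈ C, ∃ r < n, a = n * c + r := by
    intro a
    constructor
    · intro ha
      refine ⟨a / n, (hCmem _).mpr (S2 a ha), a % n, Nat.mod_lt _ hnpos, ?_⟩
      have := Nat.div_add_mod a n; omega
    · rintro ⟨c, hc, r, hr, rfl⟩
      exact S3 c r ((hCmem c).mp hc) hr
  have hA'char : ∀ a', a' ∈ A' ↔ ∃ c' ∈ C', a' = n * c' := by
    intro a'
    constructor
    · intro ha'
      obtain ⟨d, hd⟩ := S1 a' ha'
      exact ⟨d, (hC'mem d).mpr (hd ▸ ha'), hd⟩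
    · rintro ⟨c', hc', rfl⟩
      exact (hC'mem c').mp hc'
  -- ComplPair C C' m
  have hCP : ComplPair C C' m := by
    constructor
    · intro c hc c' hc'
      have := h.1 (n*c) ((hCmem c).mp hc) (n*c') ((hC'mem c').mp hc')
      rw [hRnm] at this
      have h2 : n * (c + c') < n * m := by rw [mul_add]; omega
      exact Nat.lt_of_mul_lt_mul_left h2
    · intro k hk
      have hkR : n * k < R := by
        rw [hRnm]
        exact (Nat.mul_lt_mul_left hnpos).mpr hk
      obtain ⟨p, ⟨hp1, hp2, hp3⟩, _⟩ := h.2 (n*k) hkR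
      obtain ⟨d', hd'⟩ := S1 p.2 hp2
      have hdvd1 : n ∣ p.1 := by
        have : p.1 = n * k - p.2 := by omega
        rw [this]
        exact Nat.dvd_sub (dvd_mul_right n k) ⟨d', hd'⟩
      obtain ⟨d, hd⟩ := hdvd1
      have hsum : d + d' = k := by
        have : n * d + n * d' = n * k := by omega
        have h2 : n * (d + d') = n * k := by rw [mul_add]; omega
        exact Nat.eq_of_mul_eq_mul_left hnpos h2
      refine ⟨(d, d'), ⟨(hCmem d).mpr (hd ▸ hp1), (hC'mem d').mpr (hd' ▸ hp2), hsum⟩, ?_⟩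
      rintro ⟨e, e'⟩ ⟨he, he', hesum⟩
      have hdec : n * e + n * e' = n * k := by
        rw [← mul_add, hesum]
      have huq := h.uniq hkR ((hCmem e).mp he) ((hC'mem e').mp he') hdec hp1 hp2 hp3
      have he1 : n * e = n * d := by omega
      have he2 : n * e' = n * d' := by omega
      have hed : e = d := Nat.eq_of_mul_eq_mul_left hnpos he1
      have hed' : e' = d' := Nat.eq_of_mul_eq_mul_left hnpos he2
      simp only [Prod.mk.injEq]
      exact ⟨hed, hed'⟩
  -- cards
  have hAcard : A.card = n * C.card := by
    have himg : A = Finset.image (fun p : ℕ × ℕ => n * p.1 + p.2) (C ×ˢ Finset.range n) := by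
      ext a
      rw [hAchar a]
      simp only [Finset.mem_image, Finset.mem_product, Finset.mem_range]
      constructor
      · rintro ⟨c, hc, r, hr, rfl⟩; exact ⟨(c, r), ⟨hc, hr⟩, rfl⟩
      · rintro ⟨⟨c, r⟩, ⟨hc, hr⟩, rfl⟩; exact ⟨c, hc, r, hr, rfl⟩
    rw [himg, Finset.card_image_of_injOn, Finset.card_product, Finset.card_range, mul_comm]
    rintro ⟨c, r⟩ hcr ⟨c', r'⟩ hc'r' heq
    simp only [Finset.mem_coe, Finset.mem_product, Finset.mem_range] at hcr hc'r'
    obtain ⟨h1, h2⟩ := base_inj hcr.2 hc'r'.2 heq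
    simp only [Prod.mk.injEq]
    exact ⟨h1, h2⟩
  have hA'card : A'.card = C'.card := by
    have himg : A' = Finset.image (fun c => n * c) C' := by
      ext a'
      rw [hA'char a']
      simp only [Finset.mem_image]
      exact ⟨fun ⟨c, hc, he⟩ => ⟨c, hc, he.symm⟩, fun ⟨c, hc, he⟩ => ⟨c, hc, he.symm⟩⟩
    rw [himg, Finset.card_image_of_injective _ fun x y hxy => Nat.eq_of_mul_eq_mul_left hnpos hxy]
  exact ⟨n, m, C, C', hn2, hm1, hRnm, hCP, hAchar, hA'char, hAcard, hA'card⟩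

lemma not_dvd_of_lt {R : ℕ} {d : ℤ} (h0 : d ≠ 0) (h1 : |d| < R) : ¬ (R:ℤ) ∣ d := by
  rintro ⟨c, hc⟩
  have hc0 : c ≠ 0 := by rintro rfl; simp at hc; exact h0 hc
  have h2 : (R:ℤ) ≤ |d| := by
    rw [hc, abs_mul, abs_of_nonneg (by positivity : (0:ℤ) ≤ (R:ℤ))]
    calc (R:ℤ) = R * 1 := by ring
    _ ≤ (R:ℤ) * |c| := by
        have := Int.one_le_abs hc0
        exact mul_le_mul_of_nonneg_left this (by positivity)
  omega

def Concl (R : ℕ) (A A' : Finset ℕ) : Prop :=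
  ∃ L L' : Finset ℕ, (∀ l ∈ L, l < R) ∧ (∀ l' ∈ L', l' < R) ∧
    ComplPair L L' R ∧ IsHadamard R A L ∧ IsHadamard R A' L'

lemma concl_swap {R : ℕ} {A A' : Finset ℕ} (h : Concl R A' A) : Concl R A A' := by
  obtain ⟨L, L', h1, h2, h3, h4, h5⟩ := h
  exact ⟨L', L, h2, h1, h3.swap, h5, h4⟩

lemma stepA (R : ℕ) (A A' : Finset ℕ) (hR : 2 ≤ R) (h : ComplPair A A' R) (h1A : 1 ∈ A)
    (IH : ∀ m < R, 1 ≤ m → ∀ B B' : Finset ℕ, ComplPair B B' m → Concl m B B') :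
    Concl R A A' := by
  classical
  obtain ⟨h0A, h0A'⟩ := h.zero_mem (by omega)
  by_cases hA' : ∃ x ∈ A', x ≠ 0
  case neg =>
    -- A' = {0}, A = range R
    push_neg at hA'
    have hAeq : A = Finset.range R := by
      ext k
      simp only [Finset.mem_range]
      constructor
      · intro hk; have := h.1 k hk 0 h0A'; omega
      · intro hk
        obtain ⟨p, ⟨hp1, hp2, hp3⟩, _⟩ := h.2 k hk
        have : p.2 = 0 := hA' p.2 hp2
        have : p.1 = k := by omega
        rwa [← this]
    refine ⟨Finset.range R, {0}, by simp, by simp; omega, ?_, ?_, ?_⟩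
    · constructor
      · intro l hl l' hl'
        simp only [Finset.mem_range] at hl
        simp only [Finset.mem_singleton] at hl'
        omega
      · intro k hk
        refine ⟨(k, 0), ⟨by simpa using hk, by simp, by omega⟩, ?_⟩
        rintro ⟨q1, q2⟩ ⟨hq1, hq2, hq3⟩
        simp only [Finset.mem_singleton] at hq2
        simp only [Prod.mk.injEq]
        omega
    · -- DFT
      refine isHadamard_of R A (Finset.range R) ⟨0, h0A⟩ (by rw [hAeq]) ?_
      intro a ha b hb hab
      rw [hAeq] at ha hb
      simp only [Finset.mem_range] at ha hb
      exact geom_eps R _ (not_dvd_of_lt (by omega)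
        (by rw [abs_lt]; constructor <;> [omega; omega]))
    · have hA'eq : A' = {0} := by
        ext x
        simp only [Finset.mem_singleton]
        constructor
        · intro hx; exact hA' x hx
        · rintro rfl; exact h0A'
      rw [hA'eq]
      refine isHadamard_of R {0} {0} ⟨0, by simp⟩ rfl ?_
      intro a ha b hb hab
      simp only [Finset.mem_singleton] at ha hb
      omega
  case pos =>
    obtain ⟨n, m, C, C', hn2, hm1, hRnm, hCP, hAchar, hA'char, hAcard, hA'card⟩ :=
      structure_all h hR h0A h0A' h1A hA'
    have hnpos : 0 < n := by omega
    have hmpos : 0 < m := by omega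
    have hmR : m < R := by
      rw [hRnm]
      calc m = 1 * m := (one_mul m).symm
      _ < n * m := (Nat.mul_lt_mul_right hmpos).mpr (by omega)
    obtain ⟨K, K', hKlt, hK'lt, hKP, hHadC, hHadC'⟩ := IH m hmR hm1 C C' hCP
    set L : Finset ℕ := Finset.image (fun p : ℕ × ℕ => m * p.1 + p.2) (Finset.range n ×ˢ K)
      with hLdef
    have hinj : ∀ p ∈ Finset.range n ×ˢ K, ∀ q ∈ Finset.range n ×ˢ K,
        (fun p : ℕ × ℕ => m * p.1 + p.2) p = (fun p : ℕ × ℕ => m * p.1 + p.2) q → p = q := by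
      rintro ⟨j1, k1⟩ h1 ⟨j2, k2⟩ h2 heq
      simp only [Finset.mem_product, Finset.mem_range] at h1 h2
      obtain ⟨e1, e2⟩ := base_inj (hKlt k1 h1.2) (hKlt k2 h2.2) heq
      simp only [Prod.mk.injEq]
      exact ⟨e1, e2⟩
    have hmemL : ∀ l, l ∈ L ↔ ∃ j < n, ∃ k ∈ K, l = m * j + k := by
      intro l
      simp only [hLdef, Finset.mem_image, Finset.mem_product, Finset.mem_range, Prod.exists]
      constructor
      · rintro ⟨j, k, ⟨hj, hk⟩, rfl⟩; exact ⟨j, hj, k, hk, rfl⟩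
      · rintro ⟨j, hj, k, hk, rfl⟩; exact ⟨j, k, ⟨hj, hk⟩, rfl⟩
    have hLlt : ∀ l ∈ L, l < R := by
      intro l hl
      obtain ⟨j, hj, k, hk, rfl⟩ := (hmemL l).mp hl
      have h1 : m * (j + 1) ≤ m * n := Nat.mul_le_mul_left m (by omega)
      rw [mul_add, mul_one] at h1
      have h2 := hKlt k hk
      have h3 : m * n = n * m := mul_comm m n
      rw [hRnm]
      omega
    have hL'lt : ∀ l' ∈ K', l' < R := fun l' hl' => lt_trans (hK'lt l' hl') hmR
    refine ⟨L, K', hLlt, hL'lt, ?_, ?_, ?_⟩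
    · -- ComplPair L K' R
      constructor
      · intro l hl l' hl'
        obtain ⟨j, hj, k, hk, rfl⟩ := (hmemL l).mp hl
        have hsum := hKP.1 k hk l' hl'
        have h1 : m * (j + 1) ≤ m * n := Nat.mul_le_mul_left m (by omega)
        rw [mul_add, mul_one] at h1
        have h3 : m * n = n * m := mul_comm m n
        rw [hRnm]
        omega
      · intro v hv
        have hjn : v / m < n := by
          rw [Nat.div_lt_iff_lt_mul hmpos]
          rw [hRnm] at hv
          have h3 : m * n = n * m := mul_comm m n
          omega
        have hsm : v % m < m := Nat.mod_lt _ hmpos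
        obtain ⟨q, ⟨hq1, hq2, hq3⟩, hqu⟩ := hKP.2 (v % m) hsm
        have hdm : m * (v / m) + v % m = v := Nat.div_add_mod v m
        refine ⟨(m * (v / m) + q.1, q.2), ⟨?_, hq2, by omega⟩, ?_⟩
        · exact (hmemL _).mpr ⟨v / m, hjn, q.1, hq1, rfl⟩
        · rintro ⟨l, l'⟩ ⟨hl, hl', hsum⟩
          obtain ⟨j1, hj1, k1, hk1, rfl⟩ := (hmemL l).mp hl
          have hklt : k1 + l' < m := hKP.1 k1 hk1 l' hl'
          have heq : m * j1 + (k1 + l') = m * (v / m) + v % m := by omega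
          obtain ⟨e1, e2⟩ := base_inj hklt hsm heq
          have h5 := Prod.ext_iff.mp (hqu (k1, l') ⟨hk1, hl', e2⟩)
          have h6 : k1 = q.1 := h5.1
          have h7 : l' = q.2 := h5.2
          simp only [Prod.mk.injEq]
          exact ⟨by rw [e1, h6], h7⟩
    · -- IsHadamard R A L
      refine isHadamard_of R A L ⟨0, h0A⟩ ?_ ?_
      · rw [hLdef, Finset.card_image_of_injOn hinj, Finset.card_product, Finset.card_range,
          hAcard, hHadC.1]
      · intro a ha b hb hab
        obtain ⟨c1, hc1, r1, hr1, rfl⟩ := (hAchar a).mp ha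
        obtain ⟨c2, hc2, r2, hr2, rfl⟩ := (hAchar b).mp hb
        set d : ℤ := ((n * c1 + r1 : ℕ) : ℤ) - ((n * c2 + r2 : ℕ) : ℤ) with hd
        rw [hLdef, Finset.sum_image hinj]
        rw [Finset.sum_product]
        have hterm : ∀ j k : ℕ, eps R (d * ((m * j + k : ℕ) : ℤ)) =
            eps n (d * j) * eps R (d * k) := by
          intro j k
          have h1 : d * ((m * j + k : ℕ) : ℤ) = (d * j) * m + d * k := by push_cast; ring
          rw [h1, eps_add]
          congr 1
          rw [hRnm, mul_comm n m]
          exact eps_scale m n (by omega) (d * j)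
        calc ∑ j ∈ Finset.range n, ∑ k ∈ K, eps R (d * ((m * j + k : ℕ) : ℤ))
            = ∑ j ∈ Finset.range n, ∑ k ∈ K, eps n (d * j) * eps R (d * k) := by
              exact Finset.sum_congr rfl fun j _ => Finset.sum_congr rfl fun k _ => hterm j k
          _ = (∑ j ∈ Finset.range n, eps n (d * j)) * (∑ k ∈ K, eps R (d * k)) := by
              rw [Finset.sum_mul]
              exact Finset.sum_congr rfl fun j _ => by rw [Finset.mul_sum]
          _ = 0 := by
              by_cases hr : r1 = r2
              · -- c1 ≠ c2, second factor vanishes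
                have hcne : c1 ≠ c2 := by
                  rintro rfl; exact hab (by rw [hr])
                have hdeq : d = ((c1:ℤ) - c2) * n := by rw [hd]; push_cast; rw [hr]; ring
                have hsK : ∑ k ∈ K, eps R (d * k) = 0 := by
                  have hoff := had_off m C K hHadC c1 hc1 c2 hc2 hcne
                  rw [← hoff]
                  apply Finset.sum_congr rfl
                  intro k _
                  rw [hdeq, hRnm]
                  rw [show ((c1:ℤ) - c2) * n * k = (((c1:ℤ) - c2) * k) * n by ring]
                  exact eps_scale n m (by omega) _
                rw [hsK, mul_zero]
              · -- r1 ≠ r2, first factor vanishes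
                have hnd : ¬ (n:ℤ) ∣ d := by
                  intro hdvd
                  have h2 : (n:ℤ) ∣ ((r1:ℤ) - r2) := by
                    have h3 : ((r1:ℤ) - r2) = d - ((c1:ℤ) - c2) * n := by rw [hd]; push_cast; ring
                    rw [h3]
                    exact dvd_sub hdvd (dvd_mul_left _ _)
                  exact not_dvd_of_lt (by omega) (by rw [abs_lt]; omega) h2
                rw [geom_eps n d hnd, zero_mul]
    · -- IsHadamard R A' K'
      refine isHadamard_of R A' K' ⟨0, h0A'⟩ (by rw [hA'card, hHadC'.1]) ?_
      intro a ha b hb hab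
      obtain ⟨c1, hc1, rfl⟩ := (hA'char a).mp ha
      obtain ⟨c2, hc2, rfl⟩ := (hA'char b).mp hb
      have hcne : c1 ≠ c2 := by rintro rfl; exact hab rfl
      have hoff := had_off m C' K' hHadC' c1 hc1 c2 hc2 hcne
      rw [← hoff]
      apply Finset.sum_congr rfl
      intro k _
      rw [hRnm]
      rw [show (((n * c1 : ℕ) : ℤ) - ((n * c2 : ℕ) : ℤ)) * k = (((c1:ℤ) - c2) * k) * n by
        push_cast; ring]
      exact eps_scale n m (by omega) _

lemma main : ∀ R : ℕ, 1 ≤ R → ∀ A A' : Finset ℕ, ComplPair A A' R → Concl R A A' := by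
  intro R
  induction R using Nat.strong_induction_on with
  | _ R IH =>
  intro hR1 A A' h
  obtain ⟨h0A, h0A'⟩ := h.zero_mem (by omega)
  rcases eq_or_lt_of_le hR1 with hR1' | hR2
  · -- R = 1
    have hA : A = {0} := by
      ext a
      simp only [Finset.mem_singleton]
      constructor
      · intro ha; have := h.1 a ha 0 h0A'; omega
      · rintro rfl; exact h0A
    have hA' : A' = {0} := by
      ext a
      simp only [Finset.mem_singleton]
      constructor
      · intro ha; have := h.1 0 h0A a ha; omega
      · rintro rfl; exact h0A'
    have hcp : ComplPair {0} {0} 1 := by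
      constructor
      · intro a ha a' ha'
        simp only [Finset.mem_singleton] at ha ha'
        omega
      · intro k hk
        refine ⟨(0, 0), ⟨by simp, by simp, by omega⟩, ?_⟩
        rintro ⟨q1, q2⟩ ⟨hq1, hq2, hq3⟩
        simp only [Finset.mem_singleton] at hq1 hq2
        simp [hq1, hq2]
    have hhad : IsHadamard 1 ({0} : Finset ℕ) {0} := by
      refine isHadamard_of 1 {0} {0} ⟨0, by simp⟩ rfl ?_
      intro a ha b hb hab
      simp only [Finset.mem_singleton] at ha hb
      omega
    refine ⟨{0}, {0}, by simp [← hR1'], by simp [← hR1'], by rw [← hR1']; exact hcp, ?_, ?_⟩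
    · rw [hA, ← hR1']; exact hhad
    · rw [hA', ← hR1']; exact hhad
  · -- R ≥ 2
    have IH' : ∀ m < R, 1 ≤ m → ∀ B B' : Finset ℕ, ComplPair B B' m → Concl m B B' :=
      fun m hm hm1 B B' hB => IH m hm hm1 B B' hB
    obtain ⟨p, ⟨hp1, hp2, hp3⟩, _⟩ := h.2 1 hR2
    rcases Nat.eq_zero_or_pos p.1 with hp10 | hp1pos
    · -- p.1 = 0, 1 ∈ A'
      have h1A' : 1 ∈ A' := by
        have : p.2 = 1 := by omega
        rwa [← this]
      exact concl_swap (stepA R A' A (by omega) h.swap h1A' IH')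
    · have h1A : 1 ∈ A := by
        have : p.1 = 1 := by omega
        rwa [← this]
      exact stepA R A A' (by omega) h h1A IH'

theorem stmt10 (A A' : Finset ℕ) (R : ℕ) (hR : 2 ≤ R) (h : ComplPair A A' R)
    (hA : A ≠ {0}) (hA' : A' ≠ {0}) :
    ∃ L L' : Finset ℕ, (∀ l ∈ L, l < R) ∧ (∀ l' ∈ L', l' < R) ∧
      ComplPair L L' R ∧ IsHadamard R A L ∧ IsHadamard R A' L' := by
  exact main R (by omega) A A' h
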